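/- arXiv:1612.05139 — 4 statements merged into one kernel-verified Lean document; each statement's English description precedes it below -/
import Mathlib

section
/- Let C be a monoidal category with unit object E, left unitor λ and right unitor ρ, equipped with natural transformations ι¹ : P₁ ⟹ ⊗ and ι² : P₂ ⟹ ⊗ (where P₁, P₂ : C × C ⥤ C are the projection functors and ⊗ : C × C ⥤ C is the tensor product bifunctor) which are compatible with the unit constraints, i.e. λ_A ∘ ι²_{E,A} = id_A and ρ_A ∘ ι¹_{A,E} = id_A for every object A. Then E is an initial object of C (for every object A there is exactly one morphism E → A, denoted 1_A), and moreover ι¹_{A,B} = (id_A ⊗ 1_B) ∘ ρ_A⁻¹ and ι²_{A,B} = (1_A ⊗ id_B) ∘ λ_B⁻¹ for all objects A, B. -/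
open CategoryTheory CategoryTheory.Limits CategoryTheory.MonoidalCategory

universe v u

/-- **Theorem 3.5(a).** If a monoidal category `C` carries a left
inclusion `ι¹ : P₁ ⟹ ⊗` and a right inclusion `ι² : P₂ ⟹ ⊗` which are compatible
with the unit constraints, then the unit object `E = 𝟙_ C` is initial (there is a
unique morphism `1_A : E ⟶ A` for every `A`), and
`ι¹_{A,B} = (id_A ⊗ 1_B) ∘ ρ_A⁻¹`, `ι²_{A,B} = (1_A ⊗ id_B) ∘ λ_B⁻¹`. -/
theorem inclusions_compatible_imp_initial_unit
    {C : Type u} [Category.{v} C] [MonoidalCategory C]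
    (ι₁ : CategoryTheory.Prod.fst C C ⟶ MonoidalCategory.tensor C)
    (ι₂ : CategoryTheory.Prod.snd C C ⟶ MonoidalCategory.tensor C)
    (hcompat₁ : ∀ A : C, ι₁.app (A, 𝟙_ C) ≫ (ρ_ A).hom = 𝟙 A)
    (hcompat₂ : ∀ A : C, ι₂.app (𝟙_ C, A) ≫ (λ_ A).hom = 𝟙 A) :
    (∀ A : C, ∃! _ : 𝟙_ C ⟶ A, True) ∧
    (∀ (A B : C) (oneB : 𝟙_ C ⟶ B), ι₁.app (A, B) = (ρ_ A).inv ≫ (𝟙 A ⊗ₘ oneB)) ∧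
    (∀ (A B : C) (oneA : 𝟙_ C ⟶ A), ι₂.app (A, B) = (λ_ B).inv ≫ (oneA ⊗ₘ 𝟙 B)) := by
  have key₁ : ∀ (A B : C) (oneB : 𝟙_ C ⟶ B),
      ι₁.app (A, B) = (ρ_ A).inv ≫ (𝟙 A ⊗ₘ oneB) := by
    intro A B oneB
    have h := ι₁.naturality ((𝟙 A, oneB) : ((A, 𝟙_ C) : C × C) ⟶ (A, B))
    simp only [Prod.fst_obj, Prod.fst_map, tensor_obj, tensor_map] at h
    have h1 : ι₁.app (A, 𝟙_ C) = (ρ_ A).inv := by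
      rw [← cancel_mono (ρ_ A).hom, hcompat₁ A, Iso.inv_hom_id]; rfl
    rw [h1] at h
    simpa using h
  have key₂ : ∀ (A B : C) (oneA : 𝟙_ C ⟶ A),
      ι₂.app (A, B) = (λ_ B).inv ≫ (oneA ⊗ₘ 𝟙 B) := by
    intro A B oneA
    have h := ι₂.naturality ((oneA, 𝟙 B) : ((𝟙_ C, B) : C × C) ⟶ (A, B))
    simp only [Prod.snd_obj, Prod.snd_map, tensor_obj, tensor_map] at h
    have h2 : ι₂.app (𝟙_ C, B) = (λ_ B).inv := by
      rw [← cancel_mono (λ_ B).hom, hcompat₂ B, Iso.inv_hom_id]; rfl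
    rw [h2] at h
    simpa using h
  refine ⟨fun A => ⟨ι₂.app (A, 𝟙_ C) ≫ (ρ_ A).hom, trivial, fun f _ => ?_⟩,
    key₁, key₂⟩
  -- uniqueness: any two maps 𝟙_ C ⟶ A are equal
  have hf := key₂ A (𝟙_ C) f
  have hg := key₂ A (𝟙_ C) (ι₂.app (A, 𝟙_ C) ≫ (ρ_ A).hom)
  have : (λ_ (𝟙_ C)).inv ≫ (f ⊗ₘ 𝟙 (𝟙_ C)) =
      (λ_ (𝟙_ C)).inv ≫ ((ι₂.app (A, 𝟙_ C) ≫ (ρ_ A).hom) ⊗ₘ 𝟙 (𝟙_ C)) := by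
    rw [← hf, ← hg]
  have h' : (f ⊗ₘ 𝟙 (𝟙_ C)) = ((ι₂.app (A, 𝟙_ C) ≫ (ρ_ A).hom) ⊗ₘ 𝟙 (𝟙_ C)) := by
    have := congrArg (fun x => (λ_ (𝟙_ C)).hom ≫ x) this
    simpa using this
  calc f = (ρ_ (𝟙_ C)).inv ≫ (f ⊗ₘ 𝟙 (𝟙_ C)) ≫ (ρ_ A).hom := by
        rw [tensorHom_id, rightUnitor_naturality]; simp
    _ = (ρ_ (𝟙_ C)).inv ≫ ((ι₂.app (A, 𝟙_ C) ≫ (ρ_ A).hom) ⊗ₘ 𝟙 (𝟙_ C)) ≫ (ρ_ A).hom := by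
        rw [h']
    _ = ι₂.app (A, 𝟙_ C) ≫ (ρ_ A).hom := by
        rw [tensorHom_id, rightUnitor_naturality]; simp
end

section
/- Let C be a category, I a directed preordered set (regarded as a category), and F : I ⥤ C a functor with colimit cocone (𝒜, (f^α : F(α) → 𝒜)_{α∈I}). Let K be a directed preordered set and (J_k)_{k∈K} a family of subsets of I such that each J_k is directed, J_k ⊆ J_{k'} whenever k ≤ k', and J = ⋃_{k∈K} J_k is cofinal in I. Suppose that for each k ∈ K the restriction of F to J_k has a colimit cocone (𝒜_k, (f^α_{(k)} : F(α) → 𝒜_k)_{α∈J_k}). Let f^k_{k'} : 𝒜_k → 𝒜_{k'} (for k ≤ k') and f^k : 𝒜_k → 𝒜 be the unique morphisms satisfying f^k_{k'} ∘ f^α_{(k)} = f^α_{(k')} and f^k ∘ f^α_{(k)} = f^α for all α ∈ J_k, given by the universal property of 𝒜_k. Then the assignment k ↦ 𝒜_k with the morphisms f^k_{k'} defines a functor K ⥤ C, and (𝒜, (f^k)_{k∈K}) is a colimit cocone over this functor. -/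
open CategoryTheory CategoryTheory.Limits

universe v u

/-- The inclusion functor of a subset of a preordered set, regarded as a functor
between the associated (preorder) categories. -/
def subsetEmb {I : Type*} [Preorder I] (J : Set I) : J ⥤ I :=
  Monotone.functor (f := (Subtype.val : J → I)) fun _ _ h => h

/-- **Proposition 2.3.** Let `F : I ⥤ C` be an inductive system over a
directed preordered set `I` with inductive limit `(𝒜, (f^α))`, let `K` be a directed
preordered set and `(J_k)_{k ∈ K}` a family of directed subsets of `I`, increasing in
`k`, whose union is cofinal in `I`, such that each restriction of `F` to `J_k` has an
inductive limit `(𝒜_k, (f^α_{(k)}))`.  Let `f^k_{k'} : 𝒜_k ⟶ 𝒜_{k'}` (for `k ≤ k'`)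
and `f^k : 𝒜_k ⟶ 𝒜` be the unique morphisms with `f^k_{k'} ∘ f^α_{(k)} = f^α_{(k')}`
and `f^k ∘ f^α_{(k)} = f^α` for `α ∈ J_k`.  Then `k ↦ 𝒜_k` with the `f^k_{k'}` is an
inductive system (a functor `K ⥤ C`), and `(𝒜, (f^k))` is its inductive limit. -/
theorem colimit_of_directed_subfamilies {C : Type u} [Category.{v} C]
    {I K : Type*} [Preorder I] [Preorder K]
    (hI : IsDirected I (· ≤ ·)) (hK : IsDirected K (· ≤ ·))
    (F : I ⥤ C) (c : Cocone F) (hc : IsColimit c)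
    (J : K → Set I)
    (hdir : ∀ k, DirectedOn (· ≤ ·) (J k))
    (hmono : ∀ {k k' : K}, k ≤ k' → J k ⊆ J k')
    (hcof : ∀ α : I, ∃ β ∈ ⋃ k, J k, α ≤ β)
    (ck : ∀ k : K, Cocone (subsetEmb (J k) ⋙ F))
    (hck : ∀ k : K, IsColimit (ck k))
    (Fkk : ∀ {k k' : K}, k ≤ k' → ((ck k).pt ⟶ (ck k').pt))
    (hFkk : ∀ {k k' : K} (h : k ≤ k') (α : J k),
      (ck k).ι.app α ≫ Fkk h = (ck k').ι.app ⟨α.1, hmono h α.2⟩)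
    (Fk : ∀ k : K, ((ck k).pt ⟶ c.pt))
    (hFk : ∀ (k : K) (α : J k), (ck k).ι.app α ≫ Fk k = c.ι.app α.1) :
    (∀ k : K, Fkk (le_refl k) = 𝟙 (ck k).pt) ∧
    (∀ {k k' k'' : K} (h : k ≤ k') (h' : k' ≤ k''), Fkk h ≫ Fkk h' = Fkk (h.trans h')) ∧
    (∀ {k k' : K} (h : k ≤ k'), Fkk h ≫ Fk k' = Fk k) ∧
    (∀ (B : C) (g : ∀ k : K, (ck k).pt ⟶ B),
      (∀ {k k' : K} (h : k ≤ k'), Fkk h ≫ g k' = g k) →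
      ∃! g' : c.pt ⟶ B, ∀ k : K, Fk k ≫ g' = g k) := by
  refine ⟨?_, ?_, ?_, ?_⟩
  · intro k
    refine (hck k).hom_ext fun α => ?_
    rw [hFkk (le_refl k) α]
    simp
  · intro k k' k'' h h'
    refine (hck k).hom_ext fun α => ?_
    erw [← Category.assoc, hFkk h α, hFkk h' _, hFkk (h.trans h') α]
  · intro k k' h
    refine (hck k).hom_ext fun α => ?_
    erw [← Category.assoc, hFkk h α, hFk k' _, hFk k α]
  · intro B g hg
    -- key compatibility lemma
    have key : ∀ (α β β' : I) (k k' : K) (hβ : β ∈ J k) (hβ' : β' ∈ J k')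
        (h : α ≤ β) (h' : α ≤ β'),
        F.map (homOfLE h) ≫ (ck k).ι.app ⟨β, hβ⟩ ≫ g k =
        F.map (homOfLE h') ≫ (ck k').ι.app ⟨β', hβ'⟩ ≫ g k' := by
      have step : ∀ (α β γ : I) (k k'' : K) (hβ : β ∈ J k) (hβ2 : β ∈ J k'')
          (hγ : γ ∈ J k'') (h : α ≤ β) (hβγ : β ≤ γ) (hkk : k ≤ k''),
          F.map (homOfLE h) ≫ (ck k).ι.app ⟨β, hβ⟩ ≫ g k =
          F.map (homOfLE (h.trans hβγ)) ≫ (ck k'').ι.app ⟨γ, hγ⟩ ≫ g k'' := by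
        intro α β γ k k'' hβ hβ2 hγ h hβγ hkk
        erw [← hg hkk, ← Category.assoc ((ck k).ι.app _), hFkk hkk ⟨β, hβ⟩]
        have hw := (ck k'').w (homOfLE (show (⟨β, hβ2⟩ : J k'') ≤ ⟨γ, hγ⟩ from hβγ))
        have hmap : (subsetEmb (J k'') ⋙ F).map
            (homOfLE (show (⟨β, hβ2⟩ : J k'') ≤ ⟨γ, hγ⟩ from hβγ)) =
            F.map (homOfLE hβγ) := rfl
        rw [hmap] at hw
        rw [show ((ck k'').ι.app ⟨β, hβ2⟩ : _) =
          F.map (homOfLE hβγ) ≫ (ck k'').ι.app ⟨γ, hγ⟩ from hw.symm]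
        erw [← Category.assoc, ← Category.assoc, ← F.map_comp, homOfLE_comp, Category.assoc]
      intro α β β' k k' hβ hβ' h h'
      obtain ⟨k'', hk1, hk2⟩ := hK.directed k k'
      obtain ⟨γ, hγ, hβγ, hβ'γ⟩ := hdir k'' β (hmono hk1 hβ) β' (hmono hk2 hβ')
      rw [step α β γ k k'' hβ (hmono hk1 hβ) hγ h hβγ hk1,
        step α β' γ k' k'' hβ' (hmono hk2 hβ') hγ h' hβ'γ hk2]
    -- choose, for each α, a dominating element of the union
    have choice : ∀ α : I, ∃ p : I × K, p.1 ∈ J p.2 ∧ α ≤ p.1 := by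
      intro α
      obtain ⟨β, hβ, hαβ⟩ := hcof α
      obtain ⟨k, hk⟩ := Set.mem_iUnion.mp hβ
      exact ⟨⟨β, k⟩, hk, hαβ⟩
    choose p hp1 hp2 using choice
    -- the cocone on F with apex B
    let s : Cocone F :=
      { pt := B
        ι :=
          { app := fun α => F.map (homOfLE (hp2 α)) ≫ (ck (p α).2).ι.app ⟨(p α).1, hp1 α⟩ ≫
              g (p α).2
            naturality := by
              intro α α' f
              have hαα' : α ≤ α' := leOfHom f
              simp only [Functor.const_obj_obj, Functor.const_obj_map, Category.comp_id]
              rw [← Category.assoc, ← F.map_comp,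
                Subsingleton.elim f (homOfLE hαα'), homOfLE_comp]
              exact (key α (p α').1 (p α).1 (p α').2 (p α).2 (hp1 α') (hp1 α)
                (hαα'.trans (hp2 α')) (hp2 α)) } }
    have hs : ∀ (α : I) (k : K) (hα : α ∈ J k), s.ι.app α = (ck k).ι.app ⟨α, hα⟩ ≫ g k := by
      intro α k hα
      have := key α (p α).1 α (p α).2 k (hp1 α) hα (hp2 α) (le_refl α)
      exact this.trans (by simp; rfl)
    refine ⟨hc.desc s, ?_, ?_⟩
    · intro k
      refine (hck k).hom_ext fun α => ?_
      erw [← Category.assoc, hFk k α, hc.fac s α.1, hs α.1 k α.2]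
    · intro g' hg'
      refine hc.hom_ext fun α => ?_
      rw [hc.fac s α]
      have hnat := c.w (homOfLE (hp2 α))
      rw [show (c.ι.app α : _) = F.map (homOfLE (hp2 α)) ≫ c.ι.app (p α).1 from hnat.symm,
        Category.assoc]
      erw [← hFk (p α).2 ⟨(p α).1, hp1 α⟩, Category.assoc, hg' (p α).2]
end

section
/- Let S be a monoid that is cancellative (both left and right cancellative) and conical (its only invertible element is the identity e). Let t₁, …, tₙ ∈ S and let τ₁, …, τₙ and τ'₁, …, τ'ₙ be lists over S such that for each k both τₖ and τ'ₖ are factorizations of tₖ (i.e. all entries are ≠ e and the product of the entries of τₖ, respectively τ'ₖ, equals tₖ). If the concatenations satisfy τ₁ ++ ⋯ ++ τₙ = τ'₁ ++ ⋯ ++ τ'ₙ, then τₖ = τ'ₖ for all k ∈ {1, …, n}. -/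
/-- A factorization of `t` in a monoid: a finite list of elements, all different
from the unit, whose product is `t`. -/
def IsMulFactorization {S : Type*} [Monoid S] (t : S) (σ : List S) : Prop :=
  (∀ x ∈ σ, x ≠ 1) ∧ σ.prod = t

private lemma prod_one_nil {S : Type*} [Monoid S]
    (hright : ∀ a b c : S, b * a = c * a → b = c)
    (hconical : ∀ a : S, IsUnit a → a = 1) :
    ∀ (L : List S), (∀ x ∈ L, x ≠ 1) → L.prod = 1 → L = [] := by
  intro L hL hprod
  cases L with
  | nil => rfl
  | cons x rest =>
    exfalso
    rw [List.prod_cons] at hprod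
    -- x * rest.prod = 1, show rest.prod * x = 1 too
    have h2 : rest.prod * x = 1 := by
      apply hright rest.prod
      rw [one_mul, mul_assoc, hprod, mul_one]
    have : IsUnit x := ⟨⟨x, rest.prod, hprod, h2⟩, rfl⟩
    exact hL x List.mem_cons_self (hconical x this)

private lemma cancel_aux {S : Type*} [Monoid S]
    (hleft : ∀ a b c : S, a * b = a * c → b = c)
    (hright : ∀ a b c : S, b * a = c * a → b = c)
    (hconical : ∀ a : S, IsUnit a → a = 1)
    (A A' M M' : List S) (hA : ∀ x ∈ A, x ≠ 1) (hA' : ∀ x ∈ A', x ≠ 1)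
    (hprod : A.prod = A'.prod) (hcat : A ++ M = A' ++ M') : A = A' := by
  rcases List.append_eq_append_iff.mp hcat with ⟨C, hC, _⟩ | ⟨C, hC, _⟩
  · -- A' = A ++ C
    have hp : A.prod * C.prod = A.prod * 1 := by
      rw [mul_one, ← List.prod_append, ← hC, hprod]
    have hC1 : C.prod = 1 := hleft A.prod _ _ hp
    have : C = [] := prod_one_nil hright hconical C
      (fun x hx => hA' x (by rw [hC]; exact List.mem_append_right _ hx)) hC1
    rw [hC, this, List.append_nil]
  · -- A = A' ++ C
    have hp : A'.prod * C.prod = A'.prod * 1 := by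
      rw [mul_one, ← List.prod_append, ← hC, hprod]
    have hC1 : C.prod = 1 := hleft A'.prod _ _ hp
    have : C = [] := prod_one_nil hright hconical C
      (fun x hx => hA x (by rw [hC]; exact List.mem_append_right _ hx)) hC1
    rw [hC, this, List.append_nil]

private lemma forall₂_flatten_eq {S : Type*} [Monoid S]
    (hleft : ∀ a b c : S, a * b = a * c → b = c)
    (hright : ∀ a b c : S, b * a = c * a → b = c)
    (hconical : ∀ a : S, IsUnit a → a = 1) :
    ∀ (Ls Ls' : List (List S)),
      List.Forall₂ (fun A B => (∀ x ∈ A, x ≠ 1) ∧ (∀ x ∈ B, x ≠ 1) ∧ A.prod = B.prod) Ls Ls' →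
      Ls.flatten = Ls'.flatten → Ls = Ls' := by
  intro Ls Ls' h
  induction h with
  | nil => intro _; rfl
  | cons h hs ih =>
    rename_i A B As Bs
    intro hflat
    simp only [List.flatten_cons] at hflat
    obtain ⟨h1, h2, h3⟩ := h
    have hAB : A = B := cancel_aux hleft hright hconical A B _ _ h1 h2 h3 hflat
    subst hAB
    have : As.flatten = Bs.flatten := List.append_cancel_left hflat
    rw [ih this]

/-- **Proposition 4.5.** Let `S` be a cancellative, conical monoid.
If `τ₁ ++ ⋯ ++ τₙ = τ'₁ ++ ⋯ ++ τ'ₙ`, where for each `k` both `τ k` and `τ' k`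
are factorizations of the same element `t k`, then `τ k = τ' k` for all `k`. -/
theorem factorization_concat_unique {S : Type*} [Monoid S]
    (hleft : ∀ a b c : S, a * b = a * c → b = c)
    (hright : ∀ a b c : S, b * a = c * a → b = c)
    (hconical : ∀ a : S, IsUnit a → a = 1)
    {n : ℕ} (t : Fin n → S) (τ τ' : Fin n → List S)
    (hτ : ∀ k, IsMulFactorization (t k) (τ k))
    (hτ' : ∀ k, IsMulFactorization (t k) (τ' k))
    (hcat : (List.ofFn τ).flatten = (List.ofFn τ').flatten) :
    ∀ k, τ k = τ' k := by
  have hF : List.Forall₂ (fun A B => (∀ x ∈ A, x ≠ 1) ∧ (∀ x ∈ B, x ≠ 1) ∧ A.prod = B.prod)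
      (List.ofFn τ) (List.ofFn τ') := by
    rw [List.forall₂_iff_get]
    refine ⟨by simp, fun i h1 h2 => ?_⟩
    simp only [List.get_eq_getElem, List.getElem_ofFn]
    have hl : i < n := by simpa using h1
    exact ⟨(hτ ⟨i, hl⟩).1, (hτ' ⟨i, hl⟩).1, by rw [(hτ ⟨i, hl⟩).2, (hτ' ⟨i, hl⟩).2]⟩
  have heq := forall₂_flatten_eq hleft hright hconical _ _ hF hcat
  rw [List.ofFn_inj] at heq
  exact fun k => congrFun heq k
end

section
/- Let S be a cancellative monoid that is conical, a unique factorization monoid, and an Ore monoid. Then S is totally ordered with respect to left divisibility: for all s, t ∈ S, either there exists p ∈ S with s·p = t, or there exists q ∈ S with t·q = s. -/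
/-- `σ` is a refinement of the factorization `τ = (t₁, …, tₙ)`:
`σ = τ₁ ++ ⋯ ++ τₙ` where each `τₖ` is a factorization of `tₖ`. -/
def IsRefinement {S : Type*} [Monoid S] (σ τ : List S) : Prop :=
  ∃ L : List (List S), List.Forall₂ (fun t τk => IsMulFactorization t τk) τ L ∧ σ = L.flatten

lemma prefix_prod {S : Type*} [Monoid S] {A B : List S} (h : A <+: B) :
    ∃ d : S, A.prod * d = B.prod := by
  obtain ⟨δ, rfl⟩ := h
  exact ⟨δ.prod, (List.prod_append).symm⟩

/-- **half of Theorem 4.15.** A cancellative, conical monoid which is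
a unique factorization monoid and an Ore monoid is totally ordered with respect to
left divisibility. -/
theorem totally_ordered_of_cuf_ore {S : Type*} [Monoid S]
    (hleft : ∀ a b c : S, a * b = a * c → b = c)
    (hright : ∀ a b c : S, b * a = c * a → b = c)
    (hconical : ∀ a : S, IsUnit a → a = 1)
    (huf : ∀ (t : S) (σ τ : List S), IsMulFactorization t σ → IsMulFactorization t τ →
      ∃ ρ : List S, IsRefinement ρ σ ∧ IsRefinement ρ τ)
    (hore : ∀ s t : S, ∃ r : S, (∃ p : S, s * p = r) ∧ ∃ q : S, t * q = r) :
    ∀ s t : S, (∃ p : S, s * p = t) ∨ ∃ q : S, t * q = s := by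
  intro s t
  by_cases hs : s = 1
  · exact Or.inl ⟨t, by rw [hs, one_mul]⟩
  by_cases ht : t = 1
  · exact Or.inr ⟨s, by rw [ht, one_mul]⟩
  obtain ⟨r, ⟨p, hp⟩, ⟨q, hq⟩⟩ := hore s t
  by_cases hp1 : p = 1
  · subst hp1; rw [mul_one] at hp; exact Or.inr ⟨q, by rw [hq, hp]⟩
  by_cases hq1 : q = 1
  · subst hq1; rw [mul_one] at hq; exact Or.inl ⟨p, by rw [hp, hq]⟩
  have hσ : IsMulFactorization r [s, p] := by
    constructor
    · intro x hx; simp at hx; rcases hx with rfl | rfl <;> assumption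
    · simp [hp]
  have hτ : IsMulFactorization r [t, q] := by
    constructor
    · intro x hx; simp at hx; rcases hx with rfl | rfl <;> assumption
    · simp [hq]
  obtain ⟨ρ, ⟨L, hL, hρL⟩, ⟨M, hM, hρM⟩⟩ := huf r _ _ hσ hτ
  obtain ⟨L1, L', hL1, hL'⟩ := List.forall₂_cons_left_iff.mp hL
  obtain ⟨L2, L'', hL2, hL''⟩ := List.forall₂_cons_left_iff.mp hL'.1
  have hLnil : L'' = [] := by cases hL''.1; rfl
  obtain ⟨M1, M', hM1, hM'⟩ := List.forall₂_cons_left_iff.mp hM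
  obtain ⟨M2, M'', hM2, hM''⟩ := List.forall₂_cons_left_iff.mp hM'.1
  have hMnil : M'' = [] := by cases hM''.1; rfl
  have hρ1 : ρ = L1 ++ L2 := by
    rw [hρL, hL'.2, hL''.2, hLnil]; simp
  have hρ2 : ρ = M1 ++ M2 := by
    rw [hρM, hM'.2, hM''.2, hMnil]; simp
  have hpre1 : L1 <+: ρ := hρ1 ▸ List.prefix_append L1 L2
  have hpre2 : M1 <+: ρ := hρ2 ▸ List.prefix_append M1 M2
  rcases List.prefix_or_prefix_of_prefix hpre1 hpre2 with h | h
  · obtain ⟨d, hd⟩ := prefix_prod h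
    exact Or.inl ⟨d, by rw [hL1.2, hM1.2] at hd; exact hd⟩
  · obtain ⟨d, hd⟩ := prefix_prod h
    exact Or.inr ⟨d, by rw [hL1.2, hM1.2] at hd; exact hd⟩
end
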